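/- For an undirected graph G = (V, E) and a vertex v ∈ V, the coreness core(v) (defined as the minimum λ such that there exists a permutation p of V where every vertex w occurring no later than v in p has at most λ neighbors occurring after w in p) equals the maximum over all subsets S ⊆ V containing v of the minimum degree of the induced subgraph G[S]. -/

import Mathlib

open Finset

/-- Degree of `u` inside the induced subgraph `G[S]`. -/
def degIn {V : Type*} [DecidableEq V] (G : SimpleGraph V) [DecidableRel G.Adj]
    (S : Finset V) (u : V) : ℕ :=
  (S.filter fun w => G.Adj u w).card

/-- Minimum degree of the induced subgraph `G[S]` (0 for the empty set). -/
def mindegIn {V : Type*} [DecidableEq V] (G : SimpleGraph V) [DecidableRel G.Adj]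
    (S : Finset V) : ℕ :=
  if h : S.Nonempty then S.inf' h (degIn G S) else 0

/-- `core(v)`: the maximum over subsets `S ∋ v` of the minimum degree of `G[S]`. -/
def coreMax {V : Type*} [Fintype V] [DecidableEq V] (G : SimpleGraph V) [DecidableRel G.Adj]
    (v : V) : ℕ :=
  ((univ : Finset V).powerset.filter fun S => v ∈ S).sup (mindegIn G)

lemma mindegIn_le_coreMax {V : Type*} [Fintype V] [DecidableEq V] (G : SimpleGraph V)
    [DecidableRel G.Adj] (v : V) (S : Finset V) (hv : v ∈ S) :
    mindegIn G S ≤ coreMax G v :=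
  Finset.le_sup (by simp [hv])

/-- Key construction: a good ordering (as a list) of any finset containing `v`. -/
lemma exists_good_list {V : Type*} [Fintype V] [DecidableEq V] (G : SimpleGraph V)
    [DecidableRel G.Adj] (v : V) :
    ∀ T : Finset V, v ∈ T → ∃ l : List V, l.Nodup ∧ l.toFinset = T ∧
      ∀ w ∈ l, l.idxOf w ≤ l.idxOf v →
        (T.filter fun u => G.Adj u w ∧ l.idxOf w < l.idxOf u).card ≤ coreMax G v := by
  intro T
  induction T using Finset.strongInduction with
  | _ T ih =>
    intro hv
    have hT : T.Nonempty := ⟨v, hv⟩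
    obtain ⟨w₀, hw₀T, hw₀⟩ := Finset.exists_mem_eq_inf' hT (degIn G T)
    have hdeg : degIn G T w₀ ≤ coreMax G v := by
      rw [← hw₀]
      have := mindegIn_le_coreMax G v T hv
      rwa [mindegIn, dif_pos hT] at this
    by_cases hwv : w₀ = v
    · refine ⟨w₀ :: (T.erase w₀).toList, ?_, ?_, ?_⟩
      · exact List.nodup_cons.2 ⟨fun h => (Finset.notMem_erase w₀ T)
          (Finset.mem_toList.1 h), Finset.nodup_toList _⟩
      · simp [Finset.insert_erase hw₀T]
      · intro w hw hle
        have hidxv : (w₀ :: (T.erase w₀).toList).idxOf v = 0 :=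
          List.idxOf_cons_eq _ hwv
        have hw0 : w = w₀ := by
          by_contra hne
          rw [List.idxOf_cons_ne _ (Ne.symm hne), hidxv] at hle
          omega
        subst hw0
        calc ((T.filter fun u => G.Adj u w ∧
              (w :: (T.erase w).toList).idxOf w < (w :: (T.erase w).toList).idxOf u)).card
            ≤ (T.filter fun u => G.Adj w u).card := by
              apply Finset.card_le_card
              intro u hu
              simp only [Finset.mem_filter] at hu ⊢
              exact ⟨hu.1, hu.2.1.symm⟩
          _ ≤ coreMax G v := hdeg
    · have hvT' : v ∈ T.erase w₀ := Finset.mem_erase.2 ⟨Ne.symm hwv, hv⟩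
      obtain ⟨l', hnd', htf', hprop'⟩ := ih (T.erase w₀) (Finset.erase_ssubset hw₀T) hvT'
      refine ⟨w₀ :: l', ?_, ?_, ?_⟩
      · exact List.nodup_cons.2 ⟨fun h => (Finset.notMem_erase w₀ T)
          (htf' ▸ List.mem_toFinset.2 h), hnd'⟩
      · simp [htf', Finset.insert_erase hw₀T]
      · intro w hw hle
        set l := w₀ :: l' with hl
        by_cases hww : w = w₀
        · subst hww
          calc (T.filter fun u => G.Adj u w ∧ l.idxOf w < l.idxOf u).card
              ≤ (T.filter fun u => G.Adj w u).card := by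
                apply Finset.card_le_card
                intro u hu
                simp only [Finset.mem_filter] at hu ⊢
                exact ⟨hu.1, hu.2.1.symm⟩
            _ ≤ coreMax G v := hdeg
        · have hwl' : w ∈ l' := by
            rcases List.mem_cons.1 hw with h | h
            · exact absurd h hww
            · exact h
          have hidxw : l.idxOf w = l'.idxOf w + 1 := by
            rw [hl]; exact List.idxOf_cons_ne l' (Ne.symm hww)
          have hidxv : l.idxOf v = l'.idxOf v + 1 := by
            rw [hl]; exact List.idxOf_cons_ne l' hwv
          have hle' : l'.idxOf w ≤ l'.idxOf v := by omega
          have hsub : (T.filter fun u => G.Adj u w ∧ l.idxOf w < l.idxOf u)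
              ⊆ ((T.erase w₀).filter fun u => G.Adj u w ∧ l'.idxOf w < l'.idxOf u) := by
            intro u hu
            simp only [Finset.mem_filter] at hu
            obtain ⟨huT, hadj, hlt⟩ := hu
            have huw₀ : u ≠ w₀ := by
              rintro rfl
              rw [hl, List.idxOf_cons_self] at hlt
              omega
            have hidxu : l.idxOf u = l'.idxOf u + 1 := by
              rw [hl]; exact List.idxOf_cons_ne l' (Ne.symm huw₀)
            simp only [Finset.mem_filter, Finset.mem_erase]
            exact ⟨⟨huw₀, huT⟩, hadj, by omega⟩
          exact le_trans (Finset.card_le_card hsub) (hprop' w hwl' hle')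

/-- The coreness of `v`, defined as the minimum `k` such that some ordering (permutation)
of the vertices has every vertex `w` occurring no later than `v` with at most `k` neighbors
occurring strictly after `w`, equals the maximum over subsets `S ∋ v` of the minimum degree
of the induced subgraph `G[S]`. -/
theorem coreness_perm_eq_max_min_degree {V : Type*} [Fintype V] [DecidableEq V]
    (G : SimpleGraph V) [DecidableRel G.Adj] (v : V) :
    IsLeast {k : ℕ | ∃ p : V ≃ Fin (Fintype.card V),
        ∀ w : V, p w ≤ p v →
          ((univ : Finset V).filter fun u => G.Adj u w ∧ p w < p u).card ≤ k}
      (coreMax G v) := by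
  constructor
  · -- membership: construct the ordering from the good list on univ
    obtain ⟨l, hnd, htf, hprop⟩ := exists_good_list G v univ (mem_univ v)
    have hmem : ∀ a : V, a ∈ l := fun a => by
      rw [← List.mem_toFinset, htf]; exact mem_univ a
    have hlen : l.length = Fintype.card V := by
      rw [← Finset.card_univ, ← htf, List.toFinset_card_of_nodup hnd]
    let e : Fin l.length ≃ V := hnd.getEquivOfForallMemList l hmem
    refine ⟨e.symm.trans (finCongr hlen), ?_⟩
    intro w hle
    have hval : ∀ x : V, ((e.symm.trans (finCongr hlen)) x : ℕ) = l.idxOf x := fun x => rfl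
    have hle' : l.idxOf w ≤ l.idxOf v := by
      have := hle
      rw [Fin.le_def, hval, hval] at this
      exact this
    have heq : ((univ : Finset V).filter fun u =>
        G.Adj u w ∧ (e.symm.trans (finCongr hlen)) w < (e.symm.trans (finCongr hlen)) u)
        = (univ : Finset V).filter fun u => G.Adj u w ∧ l.idxOf w < l.idxOf u := by
      ext u
      simp only [Finset.mem_filter, Fin.lt_def, hval]
    rw [heq]
    exact hprop w (hmem w) hle'
  · -- lower bound
    rintro k ⟨p, hp⟩
    apply Finset.sup_le
    intro S hS
    simp only [Finset.mem_filter, Finset.mem_powerset] at hS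
    obtain ⟨-, hvS⟩ := hS
    have hSne : S.Nonempty := ⟨v, hvS⟩
    obtain ⟨w, hwS, hwmin⟩ := Finset.exists_min_image S (fun x => p x) hSne
    rw [mindegIn, dif_pos hSne]
    refine le_trans (Finset.inf'_le _ hwS) (le_trans ?_ (hp w (hwmin v hvS)))
    apply Finset.card_le_card
    intro u hu
    simp only [degIn, Finset.mem_filter] at hu ⊢
    obtain ⟨huS, hadj⟩ := hu
    refine ⟨mem_univ u, hadj.symm, ?_⟩
    have hne : w ≠ u := hadj.ne
    have : p w ≠ p u := fun h => hne (p.injective h)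
    exact lt_of_le_of_ne (hwmin u huS) this
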